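/- The simple graph whose vertices are the 6-cycles of the Heawood graph H, with two such vertices adjacent if and only if the corresponding 6-cycles have disjoint vertex sets, is isomorphic to the Coxeter graph Γ. -/

import Mathlib

/-- Vertex set of the Heawood graph: points `(0,x)` and lines `(1,y)` of the
Fano plane on `ZMod 7`, whose lines are the triples `{x, x+1, x+3}`. -/
abbrev HeawoodVertex := Fin 2 × ZMod 7

/-- Base (asymmetric) incidence relation of the Fano plane:
point `(0,x)` lies on line `(1,y)` iff `y ∈ {x, x+1, x+3}`. -/
def heawoodRel : HeawoodVertex → HeawoodVertex → Prop := fun p q =>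
  p.1 = 0 ∧ q.1 = 1 ∧ (q.2 = p.2 ∨ q.2 = p.2 + 1 ∨ q.2 = p.2 + 3)

/-- The Heawood graph: the incidence graph of the Fano plane. -/
def heawoodGraph : SimpleGraph HeawoodVertex := SimpleGraph.fromRel heawoodRel

instance : DecidableRel heawoodRel := fun p q => by unfold heawoodRel; infer_instance

instance : DecidableRel heawoodGraph.Adj := fun p q =>
  decidable_of_iff _ (SimpleGraph.fromRel_adj heawoodRel p q).symm

/-- A 6-cycle of a graph `G` is a subgraph of `G` isomorphic to the cycle graph
on 6 vertices. -/
def IsSixCycle {V : Type*} {G : SimpleGraph V} (H : G.Subgraph) : Prop :=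
  Nonempty (H.coe ≃g SimpleGraph.cycleGraph 6)

/-- Vertex set of the Coxeter graph: four concentric 7-tuples `u, v, t, z`. -/
abbrev CoxeterVertex := Fin 4 × ZMod 7

/-- Base (asymmetric) adjacency relation for the Coxeter graph:
`u_x ~ u_{x+1}`, `v_x ~ v_{x+2}`, `t_x ~ t_{x+3}`, and `z_x ~ u_x, v_x, t_x`. -/
def coxeterRel : CoxeterVertex → CoxeterVertex → Prop := fun p q =>
  (p.1 = 0 ∧ q.1 = 0 ∧ q.2 = p.2 + 1) ∨
  (p.1 = 1 ∧ q.1 = 1 ∧ q.2 = p.2 + 2) ∨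
  (p.1 = 2 ∧ q.1 = 2 ∧ q.2 = p.2 + 3) ∨
  (p.1 = 3 ∧ (q.1 = 0 ∨ q.1 = 1 ∨ q.1 = 2) ∧ q.2 = p.2)

/-- The Coxeter graph on 28 vertices. -/
def coxeterGraph : SimpleGraph CoxeterVertex := SimpleGraph.fromRel coxeterRel

/-- The graph whose vertices are the 6-cycles of the Heawood graph, two being
adjacent if and only if their vertex sets are disjoint. -/
def heawoodSixCycleGraph : SimpleGraph {C : heawoodGraph.Subgraph // IsSixCycle C} :=
  SimpleGraph.fromRel (fun C D => Disjoint C.1.verts D.1.verts)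

namespace HSC

open SimpleGraph

instance : DecidableRel coxeterRel := fun p q => by unfold coxeterRel; infer_instance

/-- The six-cycle subgraph determined by a closed 6-walk. -/
def cyc (w : Fin 6 → HeawoodVertex) (h : ∀ i, heawoodGraph.Adj (w i) (w (i + 1))) :
    heawoodGraph.Subgraph where
  verts := Set.range w
  Adj x y := ∃ i : Fin 6, (x = w i ∧ y = w (i + 1)) ∨ (y = w i ∧ x = w (i + 1))
  adj_sub := by
    rintro x y ⟨i, ⟨rfl, rfl⟩ | ⟨rfl, rfl⟩⟩
    · exact h i
    · exact (h i).symm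
  edge_vert := by
    rintro x y ⟨i, ⟨rfl, rfl⟩ | ⟨rfl, rfl⟩⟩
    exacts [⟨i, rfl⟩, ⟨i + 1, rfl⟩]
  symm := ⟨by rintro x y ⟨i, hi⟩; exact ⟨i, hi.symm⟩⟩

lemma cyc_isSixCycle (w : Fin 6 → HeawoodVertex) (h : ∀ i, heawoodGraph.Adj (w i) (w (i + 1)))
    (hw : Function.Injective w) : IsSixCycle (cyc w h) := by
  have hmem : ∀ i : Fin 6, w i ∈ (cyc w h).verts := fun i => ⟨i, rfl⟩
  let f : Fin 6 → (cyc w h).verts := fun i => ⟨w i, hmem i⟩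
  have hbij : Function.Bijective f := by
    constructor
    · intro i j hij
      exact hw (congrArg Subtype.val hij)
    · rintro ⟨x, i, rfl⟩
      exact ⟨i, rfl⟩
  refine ⟨(RelIso.symm ⟨Equiv.ofBijective f hbij, ?_⟩)⟩
  intro i j
  show (cyc w h).coe.Adj (f i) (f j) ↔ _
  rw [SimpleGraph.Subgraph.coe_adj]
  constructor
  · rintro ⟨k, ⟨hx, hy⟩ | ⟨hx, hy⟩⟩
    · rw [cycleGraph_adj]
      right
      rw [hw hx, hw hy]
      exact add_sub_cancel_left k 1
    · rw [cycleGraph_adj]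
      left
      rw [hw hx, hw hy]
      exact add_sub_cancel_left k 1
  · rw [cycleGraph_adj]
    rintro (hij | hij)
    · refine ⟨j, Or.inr ⟨rfl, ?_⟩⟩
      rw [sub_eq_iff_eq_add] at hij
      rw [hij, add_comm]
    · refine ⟨i, Or.inl ⟨rfl, ?_⟩⟩
      rw [sub_eq_iff_eq_add] at hij
      rw [hij, add_comm]

lemma exists_cyc {H : heawoodGraph.Subgraph} (hH : IsSixCycle H) :
    ∃ (w : Fin 6 → HeawoodVertex) (h : ∀ i, heawoodGraph.Adj (w i) (w (i + 1))),
      Function.Injective w ∧ H = cyc w h := by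
  obtain ⟨e⟩ := hH
  let w : Fin 6 → HeawoodVertex := fun i => (e.symm i : HeawoodVertex)
  have hcoe : ∀ i : Fin 6, H.coe.Adj (e.symm i) (e.symm (i + 1)) := by
    intro i
    rw [e.symm.map_rel_iff]
    rw [cycleGraph_adj]
    right
    exact add_sub_cancel_left i 1
  have h : ∀ i, heawoodGraph.Adj (w i) (w (i + 1)) := fun i =>
    H.adj_sub ((SimpleGraph.Subgraph.coe_adj H _ _).mp (hcoe i))
  have hw : Function.Injective w :=
    Subtype.coe_injective.comp (e.symm.toEquiv.injective)
  refine ⟨w, h, hw, ?_⟩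
  ext x y
  · constructor
    · intro hx
      exact ⟨e ⟨x, hx⟩, congrArg Subtype.val (e.symm_apply_apply ⟨x, hx⟩)⟩
    · rintro ⟨i, rfl⟩
      exact (e.symm i).2
  · constructor
    · intro hxy
      have hx := H.edge_vert hxy
      have hy := H.edge_vert hxy.symm
      have hco : H.coe.Adj ⟨x, hx⟩ ⟨y, hy⟩ := hxy
      have hcyc := e.map_rel_iff.mpr hco
      rw [cycleGraph_adj] at hcyc
      rcases hcyc with hij | hij
      · rw [sub_eq_iff_eq_add] at hij
        refine ⟨e ⟨y, hy⟩, Or.inr ⟨?_, ?_⟩⟩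
        · exact (congrArg Subtype.val (e.symm_apply_apply ⟨y, hy⟩)).symm
        · rw [show e ⟨y,hy⟩ + 1 = e ⟨x, hx⟩ from by rw [add_comm, ← hij]]
          exact (congrArg Subtype.val (e.symm_apply_apply ⟨x, hx⟩)).symm
      · rw [sub_eq_iff_eq_add] at hij
        refine ⟨e ⟨x, hx⟩, Or.inl ⟨?_, ?_⟩⟩
        · exact (congrArg Subtype.val (e.symm_apply_apply ⟨x, hx⟩)).symm
        · rw [show e ⟨x,hx⟩ + 1 = e ⟨y, hy⟩ from by rw [hij, add_comm]]
          exact (congrArg Subtype.val (e.symm_apply_apply ⟨y, hy⟩)).symm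
    · rintro ⟨i, ⟨rfl, rfl⟩ | ⟨rfl, rfl⟩⟩
      · exact (SimpleGraph.Subgraph.coe_adj H _ _).mp (hcoe i)
      · exact ((SimpleGraph.Subgraph.coe_adj H _ _).mp (hcoe i)).symm

def pr : Fin 6 → Fin 2 := ![0, 1, 0, 1, 0, 1]

def bse : Fin 4 → Fin 6 → ZMod 7 :=
  ![![1,1,5,6,3,4], ![1,1,5,5,4,4], ![3,4,4,5,5,6], ![0,0,6,2,2,3]]

/-- The 28 explicit six-cycles of the Heawood graph, as closed walks. -/
def W : CoxeterVertex → Fin 6 → HeawoodVertex := fun p i => (pr i, bse p.1 i + p.2)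

/-- Two closed 6-walks trace out the same cycle (same edges, possibly re-indexed). -/
def Corr (w w' : Fin 6 → HeawoodVertex) : Prop :=
  (∀ i : Fin 6, ∃ j : Fin 6,
    (w i = w' j ∧ w (i + 1) = w' (j + 1)) ∨ (w i = w' (j + 1) ∧ w (i + 1) = w' j)) ∧
  (∀ j : Fin 6, ∃ i : Fin 6,
    (w i = w' j ∧ w (i + 1) = w' (j + 1)) ∨ (w i = w' (j + 1) ∧ w (i + 1) = w' j))

instance : ∀ w w', Decidable (Corr w w') := fun w w' => by unfold Corr; infer_instance

lemma corr_cyc_eq {w w' : Fin 6 → HeawoodVertex}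
    (h : ∀ i, heawoodGraph.Adj (w i) (w (i + 1)))
    (h' : ∀ i, heawoodGraph.Adj (w' i) (w' (i + 1)))
    (hc : Corr w w') : cyc w h = cyc w' h' := by
  have hv : Set.range w = Set.range w' := by
    ext x
    constructor
    · rintro ⟨i, rfl⟩
      obtain ⟨j, ⟨h1, _⟩ | ⟨h1, _⟩⟩ := hc.1 i
      exacts [h1 ▸ ⟨j, rfl⟩, h1 ▸ ⟨j + 1, rfl⟩]
    · rintro ⟨j, rfl⟩
      obtain ⟨i, ⟨h1, _⟩ | ⟨_, h2⟩⟩ := hc.2 j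
      exacts [⟨i, h1⟩, ⟨i + 1, h2⟩]
  apply SimpleGraph.Subgraph.ext hv
  ext x y
  show (∃ i : Fin 6, _ ∨ _) ↔ (∃ j : Fin 6, _ ∨ _)
  constructor
  · rintro ⟨i, ⟨rfl, rfl⟩ | ⟨rfl, rfl⟩⟩
    · obtain ⟨j, ⟨h1, h2⟩ | ⟨h1, h2⟩⟩ := hc.1 i
      exacts [⟨j, Or.inl ⟨h1, h2⟩⟩, ⟨j, Or.inr ⟨h2, h1⟩⟩]
    · obtain ⟨j, ⟨h1, h2⟩ | ⟨h1, h2⟩⟩ := hc.1 i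
      exacts [⟨j, Or.inr ⟨h1, h2⟩⟩, ⟨j, Or.inl ⟨h2, h1⟩⟩]
  · rintro ⟨j, ⟨rfl, rfl⟩ | ⟨rfl, rfl⟩⟩
    · obtain ⟨i, ⟨h1, h2⟩ | ⟨h1, h2⟩⟩ := hc.2 j
      exacts [⟨i, Or.inl ⟨h1.symm, h2.symm⟩⟩, ⟨i, Or.inr ⟨h1.symm, h2.symm⟩⟩]
    · obtain ⟨i, ⟨h1, h2⟩ | ⟨h1, h2⟩⟩ := hc.2 j
      exacts [⟨i, Or.inr ⟨h1.symm, h2.symm⟩⟩, ⟨i, Or.inl ⟨h1.symm, h2.symm⟩⟩]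

def D (x : ZMod 7) : Prop := x = 0 ∨ x = 1 ∨ x = 3

instance : DecidablePred D := fun x => by unfold D; infer_instance

set_option maxRecDepth 20000 in
set_option synthInstance.maxSize 1000 in
set_option maxHeartbeats 4000000 in
lemma key0 : ∀ a1 a2 a3 a4 a5 : ZMod 7,
    D a1 → D (a1 - a2) → D (a3 - a2) → D (a3 - a4) → D (a5 - a4) → D a5 →
    a2 ≠ 0 → a4 ≠ 0 → a2 ≠ a4 → a1 ≠ a3 → a1 ≠ a5 → a3 ≠ a5 →
    ∃ p : CoxeterVertex,
      Corr ![((0:Fin 2),(0:ZMod 7)),(1,a1),(0,a2),(1,a3),(0,a4),(1,a5)] (W p) := by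
  decide

lemma fin2 : ∀ b : Fin 2, b ≠ 0 → b = 1 := by decide
lemma fin2' : ∀ b : Fin 2, b ≠ 1 → b = 0 := by decide

lemma adj_fst_ne {x y : HeawoodVertex} (h : heawoodGraph.Adj x y) : x.1 ≠ y.1 := by
  rw [heawoodGraph, SimpleGraph.fromRel_adj] at h
  rcases h.2 with ⟨h0, h1, _⟩ | ⟨h0, h1, _⟩
  · rw [h0, h1]; decide
  · rw [h1, h0]; decide

lemma adjD {x y : ZMod 7} (h : heawoodGraph.Adj (0, x) (1, y)) : D (y - x) := by
  rw [heawoodGraph, SimpleGraph.fromRel_adj] at h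
  rcases h.2 with ⟨_, _, h3 | h3 | h3⟩ | ⟨h0, _, _⟩
  · left; rw [show y = x from h3]; exact sub_self x
  · right; left; rw [show y = x + 1 from h3]; exact add_sub_cancel_left x 1
  · right; right; rw [show y = x + 3 from h3]; exact add_sub_cancel_left x 3
  · exact absurd (show (1 : Fin 2) = 0 from h0) (by decide)

lemma adjD' {x y : ZMod 7} (h : heawoodGraph.Adj (1, y) (0, x)) : D (y - x) := adjD h.symm

lemma corr_rot {w w' v : Fin 6 → HeawoodVertex} (hw' : ∀ i, w' i = w (i + 1))
    (h : Corr w' v) : Corr w v := by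
  have e6 : ∀ i : Fin 6, i + 5 + 1 = i := by decide
  constructor
  · intro i
    obtain ⟨j, hj⟩ := h.1 (i + 5)
    rw [hw' (i + 5), hw' (i + 5 + 1), e6 i] at hj
    exact ⟨j, hj⟩
  · intro j
    obtain ⟨i, hi⟩ := h.2 j
    rw [hw' i, hw' (i + 1)] at hi
    exact ⟨i + 1, hi⟩

def τ (t : ZMod 7) : HeawoodVertex → HeawoodVertex := fun x => (x.1, x.2 + t)

lemma corr_map (t : ZMod 7) {w v : Fin 6 → HeawoodVertex} (h : Corr w v) :
    Corr (fun i => τ t (w i)) (fun i => τ t (v i)) := by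
  constructor
  · intro i
    obtain ⟨j, hj⟩ := h.1 i
    exact ⟨j, hj.imp (fun hh => ⟨congrArg _ hh.1, congrArg _ hh.2⟩)
      (fun hh => ⟨congrArg _ hh.1, congrArg _ hh.2⟩)⟩
  · intro j
    obtain ⟨i, hi⟩ := h.2 j
    exact ⟨i, hi.imp (fun hh => ⟨congrArg _ hh.1, congrArg _ hh.2⟩)
      (fun hh => ⟨congrArg _ hh.1, congrArg _ hh.2⟩)⟩

lemma exists_corr {w : Fin 6 → HeawoodVertex}
    (h : ∀ i, heawoodGraph.Adj (w i) (w (i + 1))) (hw : Function.Injective w)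
    (h0 : (w 0).1 = 0) : ∃ p, Corr w (W p) := by
  have p1 : (w 1).1 = 1 := by
    have hne := adj_fst_ne (h 0); rw [h0] at hne; exact fin2 _ (Ne.symm hne)
  have p2 : (w 2).1 = 0 := by
    have hne := adj_fst_ne (h 1); rw [p1] at hne; exact fin2' _ (Ne.symm hne)
  have p3 : (w 3).1 = 1 := by
    have hne := adj_fst_ne (h 2); rw [p2] at hne; exact fin2 _ (Ne.symm hne)
  have p4 : (w 4).1 = 0 := by
    have hne := adj_fst_ne (h 3); rw [p3] at hne; exact fin2' _ (Ne.symm hne)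
  have p5 : (w 5).1 = 1 := by
    have hne := adj_fst_ne (h 4); rw [p4] at hne; exact fin2 _ (Ne.symm hne)
  set a : Fin 6 → ZMod 7 := fun i => (w i).2 with ha
  have w0 : w 0 = ((0 : Fin 2), a 0) := Prod.ext h0 rfl
  have w1 : w 1 = ((1 : Fin 2), a 1) := Prod.ext p1 rfl
  have w2 : w 2 = ((0 : Fin 2), a 2) := Prod.ext p2 rfl
  have w3 : w 3 = ((1 : Fin 2), a 3) := Prod.ext p3 rfl
  have w4 : w 4 = ((0 : Fin 2), a 4) := Prod.ext p4 rfl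
  have w5 : w 5 = ((1 : Fin 2), a 5) := Prod.ext p5 rfl
  have A0 : heawoodGraph.Adj (0, a 0) (1, a 1) := by rw [← w0, ← w1]; exact h 0
  have A1 : heawoodGraph.Adj (1, a 1) (0, a 2) := by rw [← w1, ← w2]; exact h 1
  have A2 : heawoodGraph.Adj (0, a 2) (1, a 3) := by rw [← w2, ← w3]; exact h 2
  have A3 : heawoodGraph.Adj (1, a 3) (0, a 4) := by rw [← w3, ← w4]; exact h 3
  have A4 : heawoodGraph.Adj (0, a 4) (1, a 5) := by rw [← w4, ← w5]; exact h 4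
  have A5 : heawoodGraph.Adj (1, a 5) (0, a 0) := by rw [← w5, ← w0]; exact h 5
  have d20 : a 2 ≠ a 0 := fun hh => absurd (hw (by rw [w2, w0, hh] : w 2 = w 0)) (by decide)
  have d40 : a 4 ≠ a 0 := fun hh => absurd (hw (by rw [w4, w0, hh] : w 4 = w 0)) (by decide)
  have d24 : a 2 ≠ a 4 := fun hh => absurd (hw (by rw [w2, w4, hh] : w 2 = w 4)) (by decide)
  have d13 : a 1 ≠ a 3 := fun hh => absurd (hw (by rw [w1, w3, hh] : w 1 = w 3)) (by decide)
  have d15 : a 1 ≠ a 5 := fun hh => absurd (hw (by rw [w1, w5, hh] : w 1 = w 5)) (by decide)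
  have d35 : a 3 ≠ a 5 := fun hh => absurd (hw (by rw [w3, w5, hh] : w 3 = w 5)) (by decide)
  obtain ⟨p, hp⟩ := key0 (a 1 - a 0) (a 2 - a 0) (a 3 - a 0) (a 4 - a 0) (a 5 - a 0)
    (adjD A0)
    (by rw [sub_sub_sub_cancel_right]; exact adjD' A1)
    (by rw [sub_sub_sub_cancel_right]; exact adjD A2)
    (by rw [sub_sub_sub_cancel_right]; exact adjD' A3)
    (by rw [sub_sub_sub_cancel_right]; exact adjD A4)
    (adjD' A5)
    (sub_ne_zero_of_ne d20) (sub_ne_zero_of_ne d40)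
    (fun hh => d24 (by rwa [sub_left_inj] at hh))
    (fun hh => d13 (by rwa [sub_left_inj] at hh))
    (fun hh => d15 (by rwa [sub_left_inj] at hh))
    (fun hh => d35 (by rwa [sub_left_inj] at hh))
  refine ⟨(p.1, p.2 + a 0), ?_⟩
  have hcm := corr_map (a 0) hp
  have hE : (fun i => τ (a 0)
      ((![((0:Fin 2),(0:ZMod 7)), (1, a 1 - a 0), (0, a 2 - a 0), (1, a 3 - a 0),
          (0, a 4 - a 0), (1, a 5 - a 0)]) i)) = w := by
    funext i
    fin_cases i
    · show _ = w 0; rw [w0]; exact Prod.ext rfl (zero_add (a 0))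
    · show _ = w 1; rw [w1]; exact Prod.ext rfl (sub_add_cancel (a 1) (a 0))
    · show _ = w 2; rw [w2]; exact Prod.ext rfl (sub_add_cancel (a 2) (a 0))
    · show _ = w 3; rw [w3]; exact Prod.ext rfl (sub_add_cancel (a 3) (a 0))
    · show _ = w 4; rw [w4]; exact Prod.ext rfl (sub_add_cancel (a 4) (a 0))
    · show _ = w 5; rw [w5]; exact Prod.ext rfl (sub_add_cancel (a 5) (a 0))
  have hWsh : (fun i => τ (a 0) (W p i)) = W (p.1, p.2 + a 0) := by
    funext j
    exact Prod.ext rfl (add_assoc (bse p.1 j) p.2 (a 0))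
  rw [hE, hWsh] at hcm
  exact hcm

lemma exists_corr_all {w : Fin 6 → HeawoodVertex}
    (h : ∀ i, heawoodGraph.Adj (w i) (w (i + 1))) (hw : Function.Injective w) :
    ∃ p, Corr w (W p) := by
  by_cases h0 : (w 0).1 = 0
  · exact exists_corr h hw h0
  · have h0' : (w 0).1 = 1 := fin2 _ h0
    have h' : ∀ i : Fin 6, heawoodGraph.Adj (w (i + 1)) (w (i + 1 + 1)) := fun i => h (i + 1)
    have hwinj' : Function.Injective (fun i : Fin 6 => w (i + 1)) := fun i j hij =>
      add_right_cancel (hw hij)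
    have h1 : (w (0 + 1 : Fin 6)).1 = 0 := by
      have hne := adj_fst_ne (h 0); rw [h0'] at hne; exact fin2' _ (Ne.symm hne)
    obtain ⟨p, hp⟩ := exists_corr (w := fun i : Fin 6 => w (i + 1)) h' hwinj' h1
    exact ⟨p, corr_rot (fun i => rfl) hp⟩

lemma dW : ∀ (p : CoxeterVertex) (i : Fin 6), heawoodGraph.Adj (W p i) (W p (i + 1)) := by
  decide

lemma injW : ∀ p : CoxeterVertex, Function.Injective (W p) := by decide

lemma rangeW : ∀ p q : CoxeterVertex,
    (∀ x, (∃ i, W p i = x) ↔ (∃ i, W q i = x)) → p = q := by decide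

lemma adjW : ∀ p q : CoxeterVertex,
    ((p ≠ q ∧ (coxeterRel p q ∨ coxeterRel q p)) ↔ ∀ i j, W p i ≠ W q j) := by decide

end HSC

open HSC

/-- The graph of disjointness of 6-cycles of the Heawood graph is isomorphic to
the Coxeter graph. -/
theorem heawoodSixCycleGraph_iso_coxeterGraph :
    Nonempty (heawoodSixCycleGraph ≃g coxeterGraph) := by
  classical
  let Φ : CoxeterVertex → {C : heawoodGraph.Subgraph // IsSixCycle C} := fun p =>
    ⟨cyc (W p) (dW p), cyc_isSixCycle _ _ (injW p)⟩
  have hΦbij : Function.Bijective Φ := by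
    constructor
    · intro p q hpq
      apply rangeW p q
      have hv : (cyc (W p) (dW p)).verts = (cyc (W q) (dW q)).verts :=
        congrArg SimpleGraph.Subgraph.verts (congrArg Subtype.val hpq)
      intro x
      constructor
      · intro hx
        have hx' : x ∈ (cyc (W p) (dW p)).verts := hx
        rw [hv] at hx'; exact hx'
      · intro hx
        have hx' : x ∈ (cyc (W q) (dW q)).verts := hx
        rw [← hv] at hx'; exact hx'
    · rintro ⟨H, hH⟩
      obtain ⟨w, h, hwinj, rfl⟩ := exists_cyc hH
      obtain ⟨p, hp⟩ := exists_corr_all h hwinj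
      exact ⟨p, Subtype.ext (corr_cyc_eq h (dW p) hp).symm⟩
  have hmap : ∀ p q : CoxeterVertex,
      heawoodSixCycleGraph.Adj (Φ p) (Φ q) ↔ coxeterGraph.Adj p q := by
    intro p q
    rw [heawoodSixCycleGraph, SimpleGraph.fromRel_adj, coxeterGraph, SimpleGraph.fromRel_adj]
    rw [adjW p q]
    constructor
    · rintro ⟨hne, hdis | hdis⟩ i j hEq
      · exact Set.disjoint_left.mp hdis ⟨i, rfl⟩ ⟨j, hEq.symm⟩
      · exact Set.disjoint_left.mp hdis ⟨j, hEq.symm⟩ ⟨i, rfl⟩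
    · intro hne
      refine ⟨?_, Or.inl (Set.disjoint_left.mpr ?_)⟩
      · intro heq
        have hv : (cyc (W p) (dW p)).verts = (cyc (W q) (dW q)).verts :=
          congrArg SimpleGraph.Subgraph.verts (congrArg Subtype.val heq)
        have hmem : W p 0 ∈ (cyc (W q) (dW q)).verts := by
          rw [← hv]; exact ⟨0, rfl⟩
        obtain ⟨j, hj⟩ := hmem
        exact hne 0 j hj.symm
      · rintro x ⟨i, rfl⟩ ⟨j, hj⟩
        exact hne i j hj.symm
  exact ⟨(SimpleGraph.Iso.symm ⟨Equiv.ofBijective Φ hΦbij, fun {p q} => hmap p q⟩)⟩
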